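/- Let β, b ∈ ℕ^m and A ∈ ℕ^{m×n} with columns A_1,…,A_n satisfy b ≤ β and A_k ≤ β for all k, and let Δ, Θ be as below with s = ∏_j (1+β_j). Define the polyhedral cone C_β := {ξ ∈ ℝ^s : (ΔΘ)'ξ ≥ 0} and, for ξ = (ξ_z) ∈ ℝ^s, the polynomial value p_ξ(b) := Σ_{z ∈ ℕ^m, 0 ≠ z ≤ β} ξ_z · b^z. Then exactly one of the following two statements holds: (a) the system Ax = b has a solution x ∈ ℕ^n; (b) there exists ξ ∈ C_β with p_ξ(b) < 0. -/

import Mathlib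

open Matrix

/-- Row index set: vectors `w ∈ ℕ^m` with `w ≤ β` (entrywise). -/
abbrev RowIdx (m : ℕ) (β : Fin m → ℕ) : Type := ∀ j : Fin m, Fin (β j + 1)

/-- Column index set: pairs `(k, u)` with `1 ≤ k ≤ n` and `u ∈ ℕ^m`, `u ≤ β - A_k`. -/
abbrev ColIdx (m n : ℕ) (β : Fin m → ℕ) (A : Matrix (Fin m) (Fin n) ℕ) : Type :=
  Σ k : Fin n, ∀ j : Fin m, Fin (β j - A j k + 1)

/-- The network matrix `Θ`: `Θ[w;(k,u)] = -1` if `w = u`, `+1` if `w = u + A_k`,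
and `0` otherwise. -/
noncomputable def theta (m n : ℕ) (β : Fin m → ℕ) (A : Matrix (Fin m) (Fin n) ℕ) :
    Matrix (RowIdx m β) (ColIdx m n β A) ℝ := Matrix.of fun w c =>
  if (fun j => (w j : ℕ)) = (fun j => (c.2 j : ℕ)) then -1
  else if (fun j => (w j : ℕ)) = (fun j => (c.2 j : ℕ) + A j c.1) then 1 else 0

/-- The vector `𝐛`: `𝐛[w] = (1 if w = b else 0) - (1 if w = 0 else 0)`. -/
noncomputable def bvec (m : ℕ) (β b : Fin m → ℕ) : RowIdx m β → ℝ := fun w =>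
  (if (fun j => (w j : ℕ)) = b then 1 else 0)
    - (if (fun j => (w j : ℕ)) = (fun _ => (0 : ℕ)) then 1 else 0)

/-- The Vandermonde matrix `Δ[z;w] = w^z` (with `0^0 = 1`), `z, w ≤ β`. -/
noncomputable def delta (m : ℕ) (β : Fin m → ℕ) : Matrix (RowIdx m β) (RowIdx m β) ℝ :=
  Matrix.of fun z w => ∏ j, ((w j : ℕ) : ℝ) ^ (z j : ℕ)

lemma univ_vanish {N : ℕ} (c : Fin (N + 1) → ℝ)
    (h : ∀ x : Fin (N + 1), ∑ i : Fin (N + 1), ((x : ℕ) : ℝ) ^ (i : ℕ) * c i = 0) : c = 0 := by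
  have hdet : (Matrix.vandermonde (fun i : Fin (N+1) => ((i : ℕ) : ℝ))).det ≠ 0 := by
    rw [Matrix.det_vandermonde]
    refine Finset.prod_ne_zero_iff.2 fun i _ => Finset.prod_ne_zero_iff.2 fun j hj => ?_
    have h1 : i < j := Finset.mem_Ioi.1 hj
    have h2 : ((i : ℕ) : ℝ) < ((j : ℕ) : ℝ) := by exact_mod_cast (Fin.lt_iff_val_lt_val.1 h1)
    linarith
  refine Matrix.eq_zero_of_mulVec_eq_zero hdet ?_
  funext x
  simpa [Matrix.mulVec, Matrix.vandermonde, dotProduct] using h x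

lemma grid_vanish : ∀ (m : ℕ) (β : Fin m → ℕ) (ξ : (∀ j, Fin (β j + 1)) → ℝ),
    (∀ w : ∀ j, Fin (β j + 1),
      ∑ z : ∀ j, Fin (β j + 1), ξ z * ∏ j, ((w j : ℕ) : ℝ) ^ (z j : ℕ) = 0) →
    ξ = 0 := by
  intro m
  induction m with
  | zero =>
    intro β ξ h
    funext z
    simp only [Pi.zero_apply]
    rw [Subsingleton.elim z default]
    have h0 := h default
    rw [Fintype.sum_unique] at h0
    simp only [Fin.prod_univ_zero, mul_one] at h0
    convert h0 using 2
  | succ m ih =>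
    intro β ξ h
    set e := Fin.consEquiv (fun j : Fin (m+1) => Fin (β j + 1))
    have key : ∀ (z0 : Fin (β 0 + 1)) (zt : ∀ j : Fin m, Fin (β j.succ + 1)),
        ξ (Fin.cons z0 zt) = 0 := by
      intro z0 zt
      have hcoef : ∀ (wt : ∀ j : Fin m, Fin (β j.succ + 1)) (z0 : Fin (β 0 + 1)),
          (∑ zt : ∀ j : Fin m, Fin (β j.succ + 1),
            ξ (Fin.cons z0 zt) * ∏ j : Fin m, ((wt j : ℕ) : ℝ) ^ (zt j : ℕ)) = 0 := by
        intro wt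
        have := univ_vanish (N := β 0)
          (fun z0 => ∑ zt : ∀ j : Fin m, Fin (β j.succ + 1),
            ξ (Fin.cons z0 zt) * ∏ j : Fin m, ((wt j : ℕ) : ℝ) ^ (zt j : ℕ)) ?_
        · intro z0; exact congrFun this z0
        · intro w0
          have hw := h (Fin.cons w0 wt)
          rw [← Equiv.sum_comp e (fun z => ξ z * ∏ j, (((Fin.cons w0 wt : ∀ j, Fin (β j +1)) j : ℕ) : ℝ) ^ (z j : ℕ))] at hw
          rw [Fintype.sum_prod_type] at hw
          rw [← hw]
          refine Finset.sum_congr rfl fun z0' _ => ?_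
          rw [Finset.mul_sum]
          refine Finset.sum_congr rfl fun zt' _ => ?_
          have : ∀ (z : ∀ j : Fin (m+1), Fin (β j + 1)),
              (∏ j, (((Fin.cons w0 wt : ∀ j, Fin (β j+1)) j : ℕ) : ℝ) ^ (z j : ℕ))
              = ((w0 : ℕ) : ℝ) ^ (z 0 : ℕ) * ∏ j : Fin m, ((wt j : ℕ) : ℝ) ^ (z j.succ : ℕ) := by
            intro z
            rw [Fin.prod_univ_succ]
            simp [Fin.cons_succ]
          rw [show e (z0', zt') = Fin.cons z0' zt' from rfl, this]
          simp [Fin.cons_succ, Fin.cons_zero]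
          ring
      have := ih (fun j => β j.succ) (fun zt => ξ (Fin.cons z0 zt)) (fun wt => hcoef wt z0)
      exact congrFun this zt
    funext z
    simp only [Pi.zero_apply]
    rw [← Fin.cons_self_tail z]
    exact key (z 0) (Fin.tail z)

/-- `Δᵀ` has surjective `mulVec`. -/
lemma deltaT_surj (m : ℕ) (β : Fin m → ℕ) :
    Function.Surjective ((delta m β)ᵀ.mulVec) := by
  have hinj : Function.Injective ((delta m β)ᵀ.mulVec) := by
    intro ξ1 ξ2 hξ
    have h0 : (delta m β)ᵀ.mulVec (ξ1 - ξ2) = 0 := by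
      rw [Matrix.mulVec_sub, hξ, sub_self]
    have := grid_vanish m β (ξ1 - ξ2) ?_
    · exact sub_eq_zero.1 this
    · intro w
      have := congrFun h0 w
      simp only [Matrix.mulVec, dotProduct, Matrix.transpose_apply, delta, Matrix.of_apply,
        Pi.zero_apply] at this
      rw [← this]
      exact Finset.sum_congr rfl fun z _ => mul_comm _ _
  rw [Matrix.mulVec_surjective_iff_isUnit]
  rw [← Matrix.mulVec_injective_iff_isUnit]
  exact hinj

section Main

variable (m n : ℕ) (A : Matrix (Fin m) (Fin n) ℕ) (β : Fin m → ℕ)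

/-- the tail `u` of a column index, as a row index -/
def uIdx (hA : ∀ k j, A j k ≤ β j) (c : ColIdx m n β A) : RowIdx m β :=
  fun j => ⟨(c.2 j : ℕ), by have := (c.2 j).is_lt; have := hA c.1 j; omega⟩

/-- `u + A_k`, as a row index -/
def vIdx (hA : ∀ k j, A j k ≤ β j) (c : ColIdx m n β A) : RowIdx m β :=
  fun j => ⟨(c.2 j : ℕ) + A j c.1, by have := (c.2 j).is_lt; have := hA c.1 j; omega⟩

variable {m n A β}

lemma thetaT_apply (hA : ∀ k j, A j k ≤ β j) (η : RowIdx m β → ℝ) (c : ColIdx m n β A) :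
    (theta m n β A)ᵀ.mulVec η c =
      if uIdx m n A β hA c = vIdx m n A β hA c then -η (uIdx m n A β hA c)
      else η (vIdx m n A β hA c) - η (uIdx m n A β hA c) := by
  set u := uIdx m n A β hA c
  set v := vIdx m n A β hA c
  have hcond1 : ∀ w : RowIdx m β,
      ((fun j => (w j : ℕ)) = fun j => (c.2 j : ℕ)) ↔ w = u := by
    intro w
    constructor
    · intro h; funext j; exact Fin.ext (congrFun h j)
    · intro h; subst h; rfl
  have hcond2 : ∀ w : RowIdx m β,
      ((fun j => (w j : ℕ)) = fun j => (c.2 j : ℕ) + A j c.1) ↔ w = v := by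
    intro w
    constructor
    · intro h; funext j; exact Fin.ext (congrFun h j)
    · intro h; subst h; rfl
  simp only [Matrix.mulVec, dotProduct, Matrix.transpose_apply, theta, Matrix.of_apply]
  simp only [hcond1, hcond2]
  by_cases huv : u = v
  · rw [if_pos huv]
    rw [Finset.sum_eq_single_of_mem u (Finset.mem_univ u)]
    · rw [if_pos rfl]; ring
    · intro w _ hw
      rw [if_neg hw, if_neg (by rw [← huv]; exact hw), zero_mul]
  · rw [if_neg huv]
    have hsplit : ∀ w : RowIdx m β,
        (if w = u then (-1 : ℝ) else if w = v then 1 else 0) * η w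
          = (if w = v then η w else 0) - (if w = u then η w else 0) := by
      intro w
      by_cases h1 : w = u
      · subst h1
        rw [if_pos rfl, if_pos rfl, if_neg (by intro h; exact huv h)]
        ring
      · rw [if_neg h1, if_neg h1]
        by_cases h2 : w = v
        · rw [if_pos h2, if_pos h2]; ring
        · rw [if_neg h2, if_neg h2]; ring
    rw [Finset.sum_congr rfl fun w _ => hsplit w, Finset.sum_sub_distrib,
      Finset.sum_ite_eq' Finset.univ v η, Finset.sum_ite_eq' Finset.univ u η,
      if_pos (Finset.mem_univ v), if_pos (Finset.mem_univ u)]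

/-- monotonicity along walks: if `A x = b'` then `η b' ≥ η 0`. -/
lemma reach_ge (hA : ∀ k j, A j k ≤ β j) (η : RowIdx m β → ℝ)
    (hedge : ∀ c : ColIdx m n β A, uIdx m n A β hA c ≠ vIdx m n A β hA c →
      η (uIdx m n A β hA c) ≤ η (vIdx m n A β hA c)) :
    ∀ (N : ℕ) (x : Fin n → ℕ) (b' : Fin m → ℕ) (hb' : ∀ j, b' j ≤ β j),
      (∑ k, x k = N) → (∀ j, ∑ k, A j k * x k = b' j) →
      η (fun j => ⟨0, by omega⟩) ≤ η (fun j => ⟨b' j, by have := hb' j; omega⟩) := by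
  intro N
  induction N with
  | zero =>
    intro x b' hb' hsum hx
    have hx0 : ∀ k, x k = 0 := by
      intro k
      exact (Finset.sum_eq_zero_iff).1 hsum k (Finset.mem_univ k)
    have hb0 : ∀ j, b' j = 0 := by
      intro j
      rw [← hx j]
      simp [hx0]
    have : (fun j => (⟨b' j, by have := hb' j; omega⟩ : Fin (β j + 1)))
        = (fun j => (⟨0, by omega⟩ : Fin (β j + 1))) := by
      funext j; exact Fin.ext (hb0 j)
    rw [this]
  | succ N ihN =>
    intro x b' hb' hsum hx
    have hex : ∃ k, x k ≠ 0 := by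
      by_contra hc
      push_neg at hc
      simp [hc] at hsum
    obtain ⟨k, hk⟩ := hex
    obtain ⟨xk, hxk⟩ := Nat.exists_eq_succ_of_ne_zero hk
    set x' : Fin n → ℕ := Function.update x k xk with hx'
    have hsum' : ∑ k', x' k' = N := by
      rw [hx', Finset.sum_update_of_mem (Finset.mem_univ k), Finset.sdiff_singleton_eq_erase]
      rw [← Finset.add_sum_erase _ _ (Finset.mem_univ k), hxk] at hsum
      omega
    have hAle : ∀ j, A j k ≤ b' j := by
      intro j
      rw [← hx j]
      calc A j k ≤ A j k * x k := Nat.le_mul_of_pos_right _ (by omega)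
        _ ≤ ∑ k', A j k' * x k' := Finset.single_le_sum (f := fun k' => A j k' * x k') (fun k' _ => Nat.zero_le _) (Finset.mem_univ k)
    set b'' : Fin m → ℕ := fun j => b' j - A j k with hb''
    have hb''le : ∀ j, b'' j ≤ β j := fun j => le_trans (Nat.sub_le _ _) (hb' j)
    have hx'' : ∀ j, ∑ k', A j k' * x' k' = b'' j := by
      intro j
      rw [hx']
      rw [← Finset.add_sum_erase _ (fun k' => A j k' * Function.update x k xk k') (Finset.mem_univ k)]
      have h2 := hx j
      rw [← Finset.add_sum_erase _ (fun k' => A j k' * x k') (Finset.mem_univ k), hxk] at h2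
      have he : ∑ k' ∈ Finset.univ.erase k, A j k' * Function.update x k xk k'
          = ∑ k' ∈ Finset.univ.erase k, A j k' * x k' := by
        refine Finset.sum_congr rfl fun k' hk' => ?_
        rw [Function.update_of_ne (Finset.ne_of_mem_erase hk')]
      rw [he, Function.update_self]
      have hAj := hAle j
      have hm : A j k * Nat.succ xk = A j k * xk + A j k := Nat.mul_succ _ _
      rw [hm] at h2
      simp only [hb'']
      omega
    have hIH := ihN x' b'' hb''le hsum' hx''
    -- the edge from b'' to b'' + A_k = b'
    set c : ColIdx m n β A := ⟨k, fun j => ⟨b'' j, by have := hb' j; have := hAle j; simp only [hb'']; omega⟩⟩ with hc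
    have hu : uIdx m n A β hA c = (fun j => ⟨b'' j, by have := hb''le j; omega⟩) := rfl
    have hv : vIdx m n A β hA c = (fun j => ⟨b' j, by have := hb' j; omega⟩) := by
      funext j
      refine Fin.ext ?_
      show b'' j + A j k = b' j
      have := hAle j
      simp only [hb'']
      omega
    by_cases heq : uIdx m n A β hA c = vIdx m n A β hA c
    · rw [hu, hv] at heq
      rw [← heq]
      exact hIH
    · have := hedge c heq
      rw [hu, hv] at this
      exact le_trans hIH this
end Main
section Main2
open Matrix
variable {m n : ℕ} {A : Matrix (Fin m) (Fin n) ℕ} {β b : Fin m → ℕ}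

lemma sum_repr (hb : ∀ j, b j ≤ β j) (ξ : RowIdx m β → ℝ) :
    (∑ z ∈ Finset.univ.filter
        (fun z : RowIdx m β => (fun j => (z j : ℕ)) ≠ (fun _ => (0 : ℕ))),
      ξ z * ∏ j, ((b j : ℝ)) ^ (z j : ℕ))
    = (delta m β)ᵀ.mulVec ξ (fun j => ⟨b j, by have := hb j; omega⟩)
      - (delta m β)ᵀ.mulVec ξ (fun j => ⟨0, by omega⟩) := by
  classical
  set rb : RowIdx m β := fun j => ⟨b j, by have := hb j; omega⟩ with hrb
  set r0 : RowIdx m β := fun j => ⟨0, by omega⟩ with hr0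
  have h1 : (delta m β)ᵀ.mulVec ξ rb = ∑ z : RowIdx m β, ξ z * ∏ j, ((b j : ℝ)) ^ (z j : ℕ) := by
    simp only [Matrix.mulVec, dotProduct, Matrix.transpose_apply, delta, Matrix.of_apply]
    exact Finset.sum_congr rfl fun z _ => mul_comm _ _
  have h2 : (delta m β)ᵀ.mulVec ξ r0 = ξ r0 := by
    simp only [Matrix.mulVec, dotProduct, Matrix.transpose_apply, delta, Matrix.of_apply]
    rw [Finset.sum_eq_single_of_mem r0 (Finset.mem_univ r0)]
    · simp [hr0]
    · intro z _ hz
      have : ∃ j, (z j : ℕ) ≠ 0 := by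
        by_contra hc
        push_neg at hc
        exact hz (funext fun j => Fin.ext (hc j))
      obtain ⟨j, hj⟩ := this
      rw [Finset.prod_eq_zero (Finset.mem_univ j), zero_mul]
      have hbase : ((r0 j : ℕ) : ℝ) = 0 := by
        have : (r0 j : ℕ) = 0 := rfl
        rw [this, Nat.cast_zero]
      rw [hbase]
      exact zero_pow hj
  have hfilter : Finset.univ.filter
      (fun z : RowIdx m β => ¬ ((fun j => (z j : ℕ)) ≠ (fun _ => (0 : ℕ)))) = {r0} := by
    ext z
    simp only [Finset.mem_filter, Finset.mem_univ, true_and, not_not, Finset.mem_singleton]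
    constructor
    · intro h
      funext j
      exact Fin.ext (congrFun h j)
    · intro h
      subst h
      rfl
  have hsplit := Finset.sum_filter_add_sum_filter_not Finset.univ
    (fun z : RowIdx m β => (fun j => (z j : ℕ)) ≠ (fun _ => (0 : ℕ)))
    (fun z => ξ z * ∏ j, ((b j : ℝ)) ^ (z j : ℕ))
  rw [hfilter, Finset.sum_singleton] at hsplit
  have hz0 : ξ r0 * ∏ j, ((b j : ℝ)) ^ ((r0 j : ℕ)) = ξ r0 := by
    simp [hr0]
  rw [hz0] at hsplit
  rw [h1, h2]
  linarith


/-- Theorem of the alternative (polynomial certificate): exactly one of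
(a) `Ax = b` has a solution `x ∈ ℕ^n`, or (b) `p_ξ(b) < 0` for some
`ξ ∈ C_β = {ξ : (ΔΘ)'ξ ≥ 0}`, where `p_ξ(b) = ∑_{0 ≠ z ≤ β} ξ_z b^z`. -/
theorem stmt_14 (m n : ℕ) (hm : 0 < m) (hn : 0 < n)
    (A : Matrix (Fin m) (Fin n) ℕ) (β b : Fin m → ℕ)
    (hb : ∀ j, b j ≤ β j) (hA : ∀ k j, A j k ≤ β j) :
    Xor' (∃ x : Fin n → ℕ, ∀ j, ∑ k, A j k * x k = b j)
      (∃ ξ : RowIdx m β → ℝ,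
        (∀ c, 0 ≤ (delta m β * theta m n β A)ᵀ.mulVec ξ c) ∧
        (∑ z ∈ Finset.univ.filter
            (fun z : RowIdx m β => (fun j => (z j : ℕ)) ≠ (fun _ => (0 : ℕ))),
          ξ z * ∏ j, ((b j : ℝ)) ^ (z j : ℕ)) < 0) := by
  classical
  have hfact : ∀ ξ : RowIdx m β → ℝ,
      (delta m β * theta m n β A)ᵀ.mulVec ξ
        = (theta m n β A)ᵀ.mulVec ((delta m β)ᵀ.mulVec ξ) := by
    intro ξ
    rw [Matrix.transpose_mul, ← Matrix.mulVec_mulVec]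
  by_cases hP : ∃ x : Fin n → ℕ, ∀ j, ∑ k, A j k * x k = b j
  · left
    refine ⟨hP, ?_⟩
    rintro ⟨ξ, hξ1, hξ2⟩
    set η := (delta m β)ᵀ.mulVec ξ with hη
    have hedge : ∀ c : ColIdx m n β A, uIdx m n A β hA c ≠ vIdx m n A β hA c →
        η (uIdx m n A β hA c) ≤ η (vIdx m n A β hA c) := by
      intro c hne
      have h0 := hξ1 c
      rw [hfact ξ, ← hη, thetaT_apply hA η c, if_neg hne] at h0
      linarith
    rcases hP with ⟨x, hx⟩
    have hge := reach_ge hA η hedge (∑ k, x k) x b hb rfl hx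
    rw [sum_repr hb ξ, ← hη] at hξ2
    exact absurd hξ2 (by linarith)
  · right
    set η : RowIdx m β → ℝ :=
      fun w => if ∃ x : Fin n → ℕ, ∀ j, ∑ k, A j k * x k = (w j : ℕ) then 0 else -1 with hηdef
    have hle : ∀ w, η w ≤ 0 := by
      intro w
      simp only [hηdef]
      split <;> norm_num
    have hge1 : ∀ w, -1 ≤ η w := by
      intro w
      simp only [hηdef]
      split <;> norm_num
    obtain ⟨ξ, hξ⟩ := deltaT_surj m β η
    refine ⟨⟨ξ, ?_, ?_⟩, hP⟩
    · intro c
      rw [hfact ξ, hξ, thetaT_apply hA η c]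
      by_cases h : uIdx m n A β hA c = vIdx m n A β hA c
      · rw [if_pos h]
        have := hle (uIdx m n A β hA c)
        linarith
      · rw [if_neg h]
        by_cases hu : ∃ x : Fin n → ℕ, ∀ j, ∑ k, A j k * x k = ((uIdx m n A β hA c) j : ℕ)
        · obtain ⟨x, hxu⟩ := hu
          have hv : ∃ x : Fin n → ℕ, ∀ j, ∑ k, A j k * x k = ((vIdx m n A β hA c) j : ℕ) := by
            refine ⟨fun k' => x k' + (if k' = c.1 then 1 else 0), fun j => ?_⟩
            have hterm : ∀ k, A j k * (x k + (if k = c.1 then 1 else 0))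
                = A j k * x k + (if k = c.1 then A j k else 0) := by
              intro k
              by_cases hkc : k = c.1 <;> simp [hkc, mul_add]
            have hsum : ∑ k, A j k * (x k + (if k = c.1 then 1 else 0))
                = (∑ k, A j k * x k) + A j c.1 := by
              rw [Finset.sum_congr rfl fun k _ => hterm k, Finset.sum_add_distrib,
                Finset.sum_ite_eq' Finset.univ c.1 (fun k => A j k),
                if_pos (Finset.mem_univ c.1)]
            rw [hsum, hxu j]
            rfl
          have hu0 : η (uIdx m n A β hA c) = 0 := by
            simp only [hηdef]
            exact if_pos ⟨x, hxu⟩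
          have hv0 : η (vIdx m n A β hA c) = 0 := by
            simp only [hηdef]
            exact if_pos hv
          rw [hu0, hv0]
          norm_num
        · have hu1 : η (uIdx m n A β hA c) = -1 := by
            simp only [hηdef]
            exact if_neg hu
          rw [hu1]
          have := hge1 (vIdx m n A β hA c)
          linarith
    · rw [sum_repr hb ξ, hξ]
      have h1 : η (fun j => (⟨b j, by have := hb j; omega⟩ : Fin (β j + 1))) = -1 := by
        simp only [hηdef]
        refine if_neg ?_
        rintro ⟨x, hx⟩
        exact hP ⟨x, fun j => hx j⟩
      have h0 : η (fun j => (⟨0, by omega⟩ : Fin (β j + 1))) = 0 := by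
        simp only [hηdef]
        refine if_pos ⟨fun _ => 0, fun j => by simp⟩
      rw [h1, h0]
      norm_num
end Main2
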